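/- Let κ be a nonzero complex number and let U ⊆ ℂ be an open set with 0 ∉ U and 1 ∉ U. Suppose φ₁, φ₂ : ℂ → ℂ are complex differentiable on U and satisfy, for all z ∈ U, κ·φ₁′(z) = (1/2)·(1/z + 1/(1−z))·φ₁(z) − (1/(1−z))·φ₂(z) and κ·φ₂′(z) = −(1/z + 1/(1−z))·φ₁(z) − (1/2)·(3/z − 1/(1−z))·φ₂(z). Then φ₁′ and φ₂′ are complex differentiable on U, and for all z ∈ U: κ²·z·(1−z)·φ₁″(z) − κ·((κ+2)·z − 1)·φ₁′(z) + (κ/(2z) − 3/(4·z·(1−z)))·φ₁(z) = 0, and κ²·z·(1−z)·φ₂″(z) + κ·(κ+1)·(1−2z)·φ₂′(z) − (2κ + 3/(4·z·(1−z)))·φ₂(z) = 0. -/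

import Mathlib

/-- **Theorem 3.2 (analytic content).** If `φ₁, φ₂` are holomorphic on an open set
`U ⊆ ℂ` avoiding `0` and `1` and satisfy the first-order Knizhnik–Zamolodchikov system,
then their derivatives are holomorphic on `U` and `φ₁`, `φ₂` satisfy the stated
second-order differential equations. -/
theorem kz_second_order (κ : ℂ) (hκ : κ ≠ 0) (U : Set ℂ) (hU : IsOpen U)
    (h0 : (0 : ℂ) ∉ U) (h1 : (1 : ℂ) ∉ U)
    (φ₁ φ₂ : ℂ → ℂ)
    (hd1 : ∀ z ∈ U, DifferentiableAt ℂ φ₁ z)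
    (hd2 : ∀ z ∈ U, DifferentiableAt ℂ φ₂ z)
    (ode1 : ∀ z ∈ U, κ * deriv φ₁ z =
      (1 / 2) * (1 / z + 1 / (1 - z)) * φ₁ z - (1 / (1 - z)) * φ₂ z)
    (ode2 : ∀ z ∈ U, κ * deriv φ₂ z =
      -(1 / z + 1 / (1 - z)) * φ₁ z - (1 / 2) * (3 / z - 1 / (1 - z)) * φ₂ z) :
    (∀ z ∈ U, DifferentiableAt ℂ (deriv φ₁) z) ∧
    (∀ z ∈ U, DifferentiableAt ℂ (deriv φ₂) z) ∧
    (∀ z ∈ U, κ ^ 2 * z * (1 - z) * deriv (deriv φ₁) z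
        - κ * ((κ + 2) * z - 1) * deriv φ₁ z
        + (κ / (2 * z) - 3 / (4 * z * (1 - z))) * φ₁ z = 0) ∧
    (∀ z ∈ U, κ ^ 2 * z * (1 - z) * deriv (deriv φ₂) z
        + κ * (κ + 1) * (1 - 2 * z) * deriv φ₂ z
        - (2 * κ + 3 / (4 * z * (1 - z))) * φ₂ z = 0) := by
  have hz0 : ∀ z ∈ U, z ≠ 0 := fun z hz h => h0 (h ▸ hz)
  have hz1 : ∀ z ∈ U, (1 : ℂ) - z ≠ 0 := by
    intro z hz h
    have : z = 1 := by linear_combination -h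
    exact h1 (this ▸ hz)
  set F₁ : ℂ → ℂ := fun w => κ⁻¹ * ((1 / 2) * (w⁻¹ + (1 - w)⁻¹) * φ₁ w - (1 - w)⁻¹ * φ₂ w)
    with hF₁
  set F₂ : ℂ → ℂ :=
    fun w => κ⁻¹ * (-(w⁻¹ + (1 - w)⁻¹) * φ₁ w - (1 / 2) * (3 * w⁻¹ - (1 - w)⁻¹) * φ₂ w)
    with hF₂
  have heq1 : ∀ z ∈ U, deriv φ₁ z = F₁ z := by
    intro z hz
    rw [hF₁]
    apply mul_left_cancel₀ hκ
    rw [ode1 z hz, ← mul_assoc, mul_inv_cancel₀ hκ, one_mul]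
    ring
  have heq2 : ∀ z ∈ U, deriv φ₂ z = F₂ z := by
    intro z hz
    rw [hF₂]
    apply mul_left_cancel₀ hκ
    rw [ode2 z hz, ← mul_assoc, mul_inv_cancel₀ hκ, one_mul]
    ring
  have hinv : ∀ z ∈ U, HasDerivAt (fun w : ℂ => w⁻¹) (-(z ^ 2)⁻¹) z := fun z hz =>
    hasDerivAt_inv (hz0 z hz)
  have hinv1 : ∀ z ∈ U, HasDerivAt (fun w : ℂ => (1 - w)⁻¹) (((1 - z) ^ 2)⁻¹) z := by
    intro z hz
    have h := ((hasDerivAt_id z).const_sub 1).inv (hz1 z hz)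
    convert h using 1
    case e'_9 => simp
    all_goals rfl
  have hDF₁ : ∀ z ∈ U, HasDerivAt F₁
      (κ⁻¹ * (((1 / 2) * (-(z ^ 2)⁻¹ + ((1 - z) ^ 2)⁻¹)) * φ₁ z
        + (1 / 2) * (z⁻¹ + (1 - z)⁻¹) * deriv φ₁ z
        - (((1 - z) ^ 2)⁻¹ * φ₂ z + (1 - z)⁻¹ * deriv φ₂ z))) z := by
    intro z hz
    have h1' := (((hinv z hz).add (hinv1 z hz)).const_mul (1/2 : ℂ)).mul
      ((hd1 z hz).hasDerivAt)
    have h2' := (hinv1 z hz).mul ((hd2 z hz).hasDerivAt)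
    have h3' := ((h1'.sub h2').const_mul κ⁻¹)
    convert h3' using 1
    all_goals rfl
  have hDF₂ : ∀ z ∈ U, HasDerivAt F₂
      (κ⁻¹ * ((-(-(z ^ 2)⁻¹ + ((1 - z) ^ 2)⁻¹)) * φ₁ z
        + (-(z⁻¹ + (1 - z)⁻¹)) * deriv φ₁ z
        - (((1 / 2) * (3 * (-(z ^ 2)⁻¹) - ((1 - z) ^ 2)⁻¹)) * φ₂ z
          + (1 / 2) * (3 * z⁻¹ - (1 - z)⁻¹) * deriv φ₂ z))) z := by
    intro z hz
    have h1' := (((hinv z hz).add (hinv1 z hz)).neg).mul ((hd1 z hz).hasDerivAt)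
    have h2' := ((((hinv z hz).const_mul (3:ℂ)).sub (hinv1 z hz)).const_mul (1/2 : ℂ)).mul
      ((hd2 z hz).hasDerivAt)
    have h3' := (h1'.sub h2').const_mul κ⁻¹
    convert h3' using 1
    all_goals rfl
  have hev1 : ∀ z ∈ U, deriv φ₁ =ᶠ[nhds z] F₁ := fun z hz =>
    Filter.eventuallyEq_of_mem (hU.mem_nhds hz) heq1
  have hev2 : ∀ z ∈ U, deriv φ₂ =ᶠ[nhds z] F₂ := fun z hz =>
    Filter.eventuallyEq_of_mem (hU.mem_nhds hz) heq2
  have hdiff1 : ∀ z ∈ U, DifferentiableAt ℂ (deriv φ₁) z := fun z hz =>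
    (hDF₁ z hz).differentiableAt.congr_of_eventuallyEq (hev1 z hz)
  have hdiff2 : ∀ z ∈ U, DifferentiableAt ℂ (deriv φ₂) z := fun z hz =>
    (hDF₂ z hz).differentiableAt.congr_of_eventuallyEq (hev2 z hz)
  refine ⟨hdiff1, hdiff2, ?_, ?_⟩
  · intro z hz
    have hz' := hz0 z hz
    have h1' := hz1 z hz
    have rz := mul_inv_cancel₀ hz'
    have rz2 := mul_inv_cancel₀ (pow_ne_zero 2 hz')
    have r1 := mul_inv_cancel₀ h1'
    have r12 := mul_inv_cancel₀ (pow_ne_zero 2 h1')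
    have r2z := mul_inv_cancel₀ (mul_ne_zero (two_ne_zero (α := ℂ)) hz')
    have r4 := mul_inv_cancel₀ (mul_ne_zero (mul_ne_zero (by norm_num : (4:ℂ) ≠ 0) hz') h1')
    have hD' : κ * deriv (deriv φ₁) z = ((1 / 2) * (-(z ^ 2)⁻¹ + ((1 - z) ^ 2)⁻¹)) * φ₁ z
        + (1 / 2) * (z⁻¹ + (1 - z)⁻¹) * deriv φ₁ z
        - (((1 - z) ^ 2)⁻¹ * φ₂ z + (1 - z)⁻¹ * deriv φ₂ z) := by
      rw [(hev1 z hz).deriv_eq, (hDF₁ z hz).deriv, ← mul_assoc, mul_inv_cancel₀ hκ, one_mul]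
    have cd1 : 2*z^2*(1-z)^2*(κ * deriv (deriv φ₁) z)
        = (z^2-(1-z)^2)*φ₁ z + z*(1-z)*deriv φ₁ z
          - (2*z^2*φ₂ z + 2*z^2*(1-z)*deriv φ₂ z) := by
      linear_combination 2*z^2*(1-z)^2*hD' - (1-z)^2*(φ₁ z)*rz2 + z^2*(φ₁ z)*r12
        + z*(1-z)^2*(deriv φ₁ z)*rz + z^2*(1-z)*(deriv φ₁ z)*r1
        - 2*z^2*(φ₂ z)*r12 - 2*z^2*(1-z)*(deriv φ₂ z)*r1
    have pe1 : 2*z*(1-z)*(κ * deriv φ₁ z) = φ₁ z - 2*z*φ₂ z := by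
      linear_combination 2*z*(1-z)*(ode1 z hz) + (1-z)*(φ₁ z)*rz + z*(φ₁ z)*r1
        - 2*z*(φ₂ z)*r1
    have pe2 : 2*z*(1-z)*(κ * deriv φ₂ z) = -2*φ₁ z - (3-4*z)*φ₂ z := by
      linear_combination 2*z*(1-z)*(ode2 z hz) - 2*(1-z)*(φ₁ z)*rz - 2*z*(φ₁ z)*r1
        - 3*(1-z)*(φ₂ z)*rz + z*(φ₂ z)*r1
    apply mul_left_cancel₀ (mul_ne_zero (mul_ne_zero (by norm_num : (4:ℂ) ≠ 0) hz') h1')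
    rw [mul_zero]
    linear_combination 2*κ*cd1 + (3-2*(κ+2)*z)*pe1 - 2*z*pe2
      + 2*κ*(1-z)*(φ₁ z)*r2z - 3*(φ₁ z)*r4
  · intro z hz
    have hz' := hz0 z hz
    have h1' := hz1 z hz
    have rz := mul_inv_cancel₀ hz'
    have rz2 := mul_inv_cancel₀ (pow_ne_zero 2 hz')
    have r1 := mul_inv_cancel₀ h1'
    have r12 := mul_inv_cancel₀ (pow_ne_zero 2 h1')
    have r4 := mul_inv_cancel₀ (mul_ne_zero (mul_ne_zero (by norm_num : (4:ℂ) ≠ 0) hz') h1')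
    have hD' : κ * deriv (deriv φ₂) z = (-(-(z ^ 2)⁻¹ + ((1 - z) ^ 2)⁻¹)) * φ₁ z
        + (-(z⁻¹ + (1 - z)⁻¹)) * deriv φ₁ z
        - (((1 / 2) * (3 * (-(z ^ 2)⁻¹) - ((1 - z) ^ 2)⁻¹)) * φ₂ z
          + (1 / 2) * (3 * z⁻¹ - (1 - z)⁻¹) * deriv φ₂ z) := by
      rw [(hev2 z hz).deriv_eq, (hDF₂ z hz).deriv, ← mul_assoc, mul_inv_cancel₀ hκ, one_mul]
    have cd2 : 2*z^2*(1-z)^2*(κ * deriv (deriv φ₂) z)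
        = 2*((1-z)^2 - z^2)*φ₁ z - 2*z*(1-z)*deriv φ₁ z
          + (3*(1-z)^2 + z^2)*φ₂ z - 3*z*(1-z)^2*deriv φ₂ z + z^2*(1-z)*deriv φ₂ z := by
      linear_combination 2*z^2*(1-z)^2*hD' + 2*(1-z)^2*(φ₁ z)*rz2 - 2*z^2*(φ₁ z)*r12
        - 2*z*(1-z)^2*(deriv φ₁ z)*rz - 2*z^2*(1-z)*(deriv φ₁ z)*r1
        + 3*(1-z)^2*(φ₂ z)*rz2 + z^2*(φ₂ z)*r12
        - 3*z*(1-z)^2*(deriv φ₂ z)*rz + z^2*(1-z)*(deriv φ₂ z)*r1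
    have pe1 : 2*z*(1-z)*(κ * deriv φ₁ z) = φ₁ z - 2*z*φ₂ z := by
      linear_combination 2*z*(1-z)*(ode1 z hz) + (1-z)*(φ₁ z)*rz + z*(φ₁ z)*r1
        - 2*z*(φ₂ z)*r1
    have pe2 : 2*z*(1-z)*(κ * deriv φ₂ z) = -2*φ₁ z - (3-4*z)*φ₂ z := by
      linear_combination 2*z*(1-z)*(ode2 z hz) - 2*(1-z)*(φ₁ z)*rz - 2*z*(φ₁ z)*r1
        - 3*(1-z)*(φ₂ z)*rz + z*(φ₂ z)*r1
    apply mul_left_cancel₀ (mul_ne_zero (mul_ne_zero (by norm_num : (4:ℂ) ≠ 0) hz') h1')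
    rw [mul_zero]
    linear_combination 2*κ*cd2 - 2*pe1 + (-3+4*z+2*(κ+1)*(1-2*z))*pe2 - 3*(φ₂ z)*r4
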